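/- Let f: T → Δ^p be a type (i) morphism of necklaces (injective with |V_{Δ^p} - J_{Δ^p}| - |V_T - J_T| = 1) whose source T has more than one bead. Then T has exactly two beads and the image of f is the subnecklace Δ^{p-i} ∨ Δ^i of Δ^p, for some 0 < i < p, whose first bead is spanned by vertices {0,1,...,p-i} and whose second bead is spanned by {p-i,...,p}. -/

import Mathlib

/-! Combinatorial model of necklaces (wedges of simplices glued end to end),
encoded by the totally ordered vertex set `Fin (m+1)` together with the
subset `J` of joints (containing the first and last vertex); beads are the
intervals between consecutive joints. -/

structure Necklace where
  m : ℕ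
  J : Finset (Fin (m + 1))
  zero_mem : 0 ∈ J
  last_mem : Fin.last m ∈ J

namespace Necklace

/-- Two vertices lie in a common bead. -/
def SameBead (T : Necklace) (v w : Fin (T.m + 1)) : Prop :=
  ∃ a b : Fin (T.m + 1), a ∈ T.J ∧ b ∈ T.J ∧ (∀ c ∈ T.J, c ≤ a ∨ b ≤ c) ∧
    a ≤ v ∧ v ≤ b ∧ a ≤ w ∧ w ≤ b

/-- A morphism of necklaces: a vertex-level monotone map preserving the first
and last vertices and mapping each bead into a single bead.  (Such data is
equivalent to a simplicial map of necklaces preserving endpoints.) -/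
structure Hom (T T' : Necklace) where
  f : Fin (T.m + 1) → Fin (T'.m + 1)
  mono : Monotone f
  map_zero : f 0 = 0
  map_last : f (Fin.last T.m) = Fin.last T'.m
  bead : ∀ v w, SameBead T v w → SameBead T' (f v) (f w)

/-- Identity morphism. -/
def Hom.id (T : Necklace) : Hom T T :=
  ⟨_root_.id, monotone_id, rfl, rfl, fun _ _ h => h⟩

/-- Composition of morphisms of necklaces. -/
def Hom.comp {T T' T'' : Necklace} (g : Hom T' T'') (h : Hom T T') : Hom T T'' :=
  ⟨g.f ∘ h.f, g.mono.comp h.mono,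
    by simp [Function.comp, h.map_zero, g.map_zero],
    by simp [Function.comp, h.map_last, g.map_last],
    fun v w hb => g.bead _ _ (h.bead v w hb)⟩

/-- The set of non-joint vertices. -/
def nonJoints (T : Necklace) : Finset (Fin (T.m + 1)) := Finset.univ \ T.J

/-- The number of non-joint vertices, `N = |V_T - J_T|`. -/
def N (T : Necklace) : ℕ := T.nonJoints.card

/-- Enumeration of the non-joint vertices in increasing order. -/
noncomputable def enum (T : Necklace) : Fin T.N ≃o {x // x ∈ T.nonJoints} :=
  T.nonJoints.orderIsoOfFin rfl

/-- The subset of vertices encoded by a cube-vertex `s : Fin (N T) → Bool`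
(the joints together with the non-joints whose coordinate is `true`). -/
noncomputable def subsetOf (T : Necklace) (s : Fin T.N → Bool) : Finset (Fin (T.m + 1)) :=
  T.J ∪ (Finset.univ.filter (fun i => s i = true)).image (fun i => (T.enum i : Fin (T.m + 1)))

/-- The functor `P₁(g) : {0,1}^{N T} → {0,1}^{N T'}` induced by a morphism of
necklaces, expressed on vertices of the cubes via indicator sequences. -/
noncomputable def P1 {T T' : Necklace} (g : Hom T T') (s : Fin T.N → Bool) :
    Fin T'.N → Bool :=
  fun i' => decide ((T'.enum i' : Fin (T'.m + 1)) ∈ (T.subsetOf s).image g.f)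

/-- Type (i) morphisms: injective with `|V' - J'| = |V - J| + 1`. -/
def TypeI {T T' : Necklace} (g : Hom T T') : Prop :=
  Function.Injective g.f ∧ T'.N = T.N + 1

/-- Type (ii) morphisms: a wedge of identities and exactly one simplicial
codegeneracy; vertex-theoretically, a surjection collapsing exactly one pair of
consecutive vertices, not both of which are joints, mapping joints bijectively
onto joints. -/
def TypeII {T T' : Necklace} (g : Hom T T') : Prop :=
  Function.Surjective g.f ∧ Finset.image g.f T.J = T'.J ∧ Set.InjOn g.f (T.J : Set _) ∧
  ∃ v : Fin T.m, g.f v.castSucc = g.f v.succ ∧ ¬(v.castSucc ∈ T.J ∧ v.succ ∈ T.J) ∧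
    ∀ a b, g.f a = g.f b → a = b ∨ ({a, b} : Finset _) = {v.castSucc, v.succ}

/-- Type (iii) morphisms: collapse of a `Δ¹` bead (both of whose endpoints are
joints) to a point, injective elsewhere. -/
def TypeIII {T T' : Necklace} (g : Hom T T') : Prop :=
  Function.Surjective g.f ∧ Finset.image g.f T.J = T'.J ∧
  ∃ v : Fin T.m, g.f v.castSucc = g.f v.succ ∧ v.castSucc ∈ T.J ∧ v.succ ∈ T.J ∧
    ∀ a b, g.f a = g.f b → a = b ∨ ({a, b} : Finset _) = {v.castSucc, v.succ}

/-- `g` is an identity morphism of necklaces. -/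
def IsIdentity {T T' : Necklace} (g : Hom T T') : Prop :=
  T = T' ∧ ∀ v, ((g.f v : ℕ) = (v : ℕ))

/-- Compositions of morphisms of types (i), (ii), (iii). -/
inductive IsGenComp : ∀ {T T' : Necklace}, Hom T T' → Prop
  | of {T T'} (g : Hom T T') : TypeI g ∨ TypeII g ∨ TypeIII g → IsGenComp g
  | comp {T T' T''} (g : Hom T T') (g' : Hom T' T'') :
      IsGenComp g → IsGenComp g' → IsGenComp (g'.comp g)

/-- Compositions of `n` morphisms of type (i). -/
inductive IsCompI : ∀ {T T' : Necklace}, Hom T T' → ℕ → Prop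
  | of {T T'} (g : Hom T T') : TypeI g → IsCompI g 1
  | comp {T T' T''} (g : Hom T T') (g' : Hom T' T'') {n n' : ℕ} :
      IsCompI g n → IsCompI g' n' → IsCompI (g'.comp g) (n + n')

/-- The standard simplex `Δᵖ` regarded as a necklace with one bead. -/
def simplex (p : ℕ) : Necklace :=
  ⟨p, {0, Fin.last p}, by simp, by simp⟩

end Necklace

open Necklace in
/-- A type (i) morphism of necklaces `f : T → Δᵖ` whose source
has more than one bead has exactly two beads (i.e. three joints), is surjective on
vertices, and its image is the subnecklace `Δ^{p-i} ∨ Δ^i` of `Δᵖ` for some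
`0 < i < p`: the image of the joints is `{0, p - i, p}`. -/
theorem typeI_to_simplex_image {p : ℕ} (hp : 1 ≤ p) {T : Necklace}
    (g : Necklace.Hom T (Necklace.simplex p))
    (hg : Necklace.TypeI g) (hbeads : 3 ≤ T.J.card) :
    T.J.card = 3 ∧ Function.Surjective g.f ∧
      ∃ j : Fin (p + 1), 0 < (j : ℕ) ∧ (j : ℕ) < p ∧
        Finset.image g.f T.J = {0, j, Fin.last p} := by
  obtain ⟨hinj, hN⟩ := hg
  have h0l : (0 : Fin (p + 1)) ≠ Fin.last p := by
    intro h
    have := congrArg Fin.val h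
    simp only [Fin.val_zero, Fin.val_last] at this
    omega
  have hJs : (Necklace.simplex p).J.card = 2 := by
    show ({0, Fin.last p} : Finset (Fin (p + 1))).card = 2
    rw [Finset.card_insert_of_notMem (by simpa using h0l), Finset.card_singleton]
  have hNs : (Necklace.simplex p).N = p - 1 := by
    rw [Necklace.N, Necklace.nonJoints, Finset.card_sdiff_of_subset (Finset.subset_univ _), hJs]
    have hu : (Finset.univ : Finset (Fin ((Necklace.simplex p).m + 1))).card = p + 1 := by
      rw [Finset.card_univ, Fintype.card_fin]; rfl
    rw [hu]
    omega
  have hNT : T.N = T.m + 1 - T.J.card := by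
    rw [Necklace.N, Necklace.nonJoints, Finset.card_sdiff_of_subset (Finset.subset_univ _)]
    simp
  have hle : T.J.card ≤ T.m + 1 := by
    simpa using Finset.card_le_univ T.J
  have hcard_le : T.m + 1 ≤ p + 1 := by
    have := Fintype.card_le_of_injective g.f hinj
    rw [Fintype.card_fin, Fintype.card_fin] at this
    exact this
  rw [hNs] at hN
  rw [hNT] at hN
  have hm : T.m = p := by omega
  have hJ3 : T.J.card = 3 := by omega
  have hsurj : Function.Surjective g.f := by
    have hc : Fintype.card (Fin (T.m + 1)) = Fintype.card (Fin ((Necklace.simplex p).m + 1)) := by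
      rw [Fintype.card_fin, Fintype.card_fin, hm]; rfl
    exact ((Fintype.bijective_iff_injective_and_card g.f).mpr ⟨hinj, hc⟩).2
  refine ⟨hJ3, hsurj, ?_⟩
  have h0mem : (0 : Fin (p + 1)) ∈ Finset.image g.f T.J := by
    have := g.map_zero
    exact this ▸ Finset.mem_image_of_mem _ T.zero_mem
  have hlmem : Fin.last p ∈ Finset.image g.f T.J := by
    have := g.map_last
    exact this ▸ Finset.mem_image_of_mem _ T.last_mem
  have hcardim : (Finset.image g.f T.J).card = 3 := by
    rw [Finset.card_image_of_injective _ hinj, hJ3]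
  have hsub0 : ({0, Fin.last p} : Finset (Fin (p + 1))) ⊆ Finset.image g.f T.J := by
    intro x hx
    rcases Finset.mem_insert.mp hx with h | h
    · exact h ▸ h0mem
    · exact (Finset.mem_singleton.mp h) ▸ hlmem
  have hsdiff : ((Finset.image g.f T.J) \ ({0, Fin.last p} : Finset (Fin (p + 1)))).card = 1 := by
    erw [Finset.card_sdiff_of_subset hsub0, hcardim]
    rw [Finset.card_insert_of_notMem (by simpa using h0l), Finset.card_singleton]
  obtain ⟨j, hj⟩ := Finset.card_eq_one.mp hsdiff
  have hjmem : j ∈ (Finset.image g.f T.J) \ ({0, Fin.last p} : Finset (Fin (p + 1))) := by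
    rw [hj]; exact Finset.mem_singleton_self j
  replace hjmem := Finset.mem_sdiff.mp hjmem
  obtain ⟨hjim, hjnot⟩ := hjmem
  replace hjnot : ¬(j = 0 ∨ j = Fin.last p) := fun h => hjnot (by
    rcases h with h | h
    · exact h ▸ Finset.mem_insert_self _ _
    · exact h ▸ Finset.mem_insert_of_mem (Finset.mem_singleton_self _))
  rw [not_or] at hjnot
  obtain ⟨hj0, hjl⟩ := hjnot
  refine ⟨j, ?_, ?_, ?_⟩
  · exact Nat.pos_of_ne_zero fun h => hj0 (Fin.ext (by simpa using h))
  · have h1 : (j : ℕ) ≤ p := Nat.lt_succ_iff.mp j.isLt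
    have h2 : (j : ℕ) ≠ p := fun h => hjl (Fin.ext (by simpa using h))
    omega
  · have hsub : ({0, j, Fin.last p} : Finset (Fin (p + 1))) ⊆ Finset.image g.f T.J := by
      intro x hx
      rcases Finset.mem_insert.mp hx with h | h
      · exact h ▸ h0mem
      rcases Finset.mem_insert.mp h with h | h
      · exact h ▸ hjim
      · exact (Finset.mem_singleton.mp h) ▸ hlmem
    have hcard3 : ({0, j, Fin.last p} : Finset (Fin (p + 1))).card = 3 := by
      erw [Finset.card_insert_of_notMem (fun h => (Finset.mem_insert.mp h).elim (fun h => hj0 h.symm) (fun h => h0l (Finset.mem_singleton.mp h))),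
        Finset.card_insert_of_notMem (fun h => hjl (Finset.mem_singleton.mp h)), Finset.card_singleton]
    exact ((Finset.eq_of_subset_of_card_le hsub (by erw [hcardim, hcard3])).symm)
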